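/- Let G be an ℓ-partite graph as above with adjacency matrix A and second largest eigenvalue λ₂. Let Sⱼ ⊆ Vⱼ with |Sⱼ| = a for all j, and suppose that for every i and every u ∈ Sᵢ, u has at least d neighbors in ⋃_{j≠i} Sⱼ, with a ≥ 1. Then a ≥ m(d − λ₂)/((ℓ−1)n − λ₂). -/

import Mathlib

open Matrix Finset

variable {V : Type} [Fintype V] [DecidableEq V]

lemma inner_eq_dot (x y : EuclideanSpace ℝ V) :
    (inner ℝ x y : ℝ) = x ⬝ᵥ (y : V → ℝ) := by
  simp [PiLp.inner_apply, dotProduct, RCLike.inner_apply, mul_comm]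

lemma dot_symm (A : Matrix V V ℝ) (hA : A.IsHermitian) (x y : V → ℝ) :
    x ⬝ᵥ (A *ᵥ y) = (A *ᵥ x) ⬝ᵥ y := by
  rw [Matrix.dotProduct_mulVec, ← Matrix.mulVec_transpose]
  have : Aᵀ = A := by
    have := hA.eq
    rwa [Matrix.conjTranspose_eq_transpose_of_trivial] at this
  rw [this]

lemma quad_bound (A : Matrix V V ℝ) (hA : A.IsHermitian)
    (hc : 2 ≤ Fintype.card V) (e : Fin (Fintype.card V) ≃ V)
    (hmono : Antitone (hA.eigenvalues ∘ e)) (k : ℝ)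
    (hgap : hA.eigenvalues (e ⟨1, by omega⟩) < k)
    (o : EuclideanSpace ℝ V) (ho : A *ᵥ o = k • o) (hone : o ≠ 0)
    (y : EuclideanSpace ℝ V) (hy : (inner ℝ o y : ℝ) = 0) :
    (y : V → ℝ) ⬝ᵥ (A *ᵥ y) ≤ hA.eigenvalues (e ⟨1, by omega⟩) * ((y : V → ℝ) ⬝ᵥ y) := by
  set B := hA.eigenvectorBasis with hB
  set μ := hA.eigenvalues with hμ
  set l2 := μ (e ⟨1, by omega⟩) with hl2
  -- key1 : ⟪B i, A *ᵥ x⟫ = μ i * ⟪B i, x⟫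
  have key1 : ∀ (i : V) (x : EuclideanSpace ℝ V),
      (inner ℝ (B i) (WithLp.toLp 2 (A *ᵥ x)) : ℝ) = μ i * inner ℝ (B i) x := by
    intro i x
    have heig : A *ᵥ (B i : V → ℝ) = μ i • (B i : V → ℝ) := hA.mulVec_eigenvectorBasis i
    rw [inner_eq_dot, inner_eq_dot, WithLp.ofLp_toLp, dot_symm A hA, heig, smul_dotProduct, smul_eq_mul]
  -- μ i < k for i ≠ e 0
  have hlt : ∀ i : V, i ≠ e ⟨0, by omega⟩ → μ i ≤ l2 := by
    intro i hi
    have h1 : (⟨1, by omega⟩ : Fin (Fintype.card V)) ≤ e.symm i := by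
      have hne : e.symm i ≠ ⟨0, by omega⟩ := fun h => hi (by rw [← e.apply_symm_apply i, h])
      have hv : (e.symm i).val ≠ 0 := by
        intro h0; exact hne (Fin.ext h0)
      rw [Fin.le_def]
      show (1:ℕ) ≤ (e.symm i).val
      omega
    have := hmono h1
    simpa using this
  -- repr of o vanishes off e 0
  have key2 : ∀ i : V, i ≠ e ⟨0, by omega⟩ → B.repr o i = 0 := by
    intro i hi
    have h1 : (inner ℝ (B i) (WithLp.toLp 2 (A *ᵥ o)) : ℝ) = μ i * inner ℝ (B i) o :=
      key1 i o
    have h2 : (inner ℝ (B i) (WithLp.toLp 2 (A *ᵥ o)) : ℝ) = k * inner ℝ (B i) o := by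
      rw [ho]
      rw [inner_eq_dot, inner_eq_dot, WithLp.ofLp_toLp, dotProduct_smul, smul_eq_mul]
    have h3 : (μ i - k) * (inner ℝ (B i) o : ℝ) = 0 := by rw [h1] at h2; nlinarith [h2]
    have h4 : μ i - k ≠ 0 := by have := hlt i hi; nlinarith
    have := mul_eq_zero.mp h3
    rcases this with h | h
    · exact absurd h h4
    · rw [B.repr_apply_apply]; exact h
  -- o = c0 • B (e 0)
  have hsum := B.sum_repr o
  obtain ⟨c0, hc0def⟩ : ∃ c, B.repr o (e ⟨0, by omega⟩) = c := ⟨_, rfl⟩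
  have ho_eq : o = c0 • B (e ⟨0, by omega⟩) := by
    have hss : ∑ i, B.repr o i • B i = B.repr o (e ⟨0, by omega⟩) • B (e ⟨0, by omega⟩) :=
      Finset.sum_eq_single _ (fun b _ hb => by rw [key2 b hb, zero_smul])
        (fun h => absurd (Finset.mem_univ _) h)
    rw [← hsum, hss, hc0def]
  have hc0 : c0 ≠ 0 := by
    intro h; apply hone; rw [ho_eq, h, zero_smul]
  -- repr of y at e 0 is 0
  have key3 : B.repr y (e ⟨0, by omega⟩) = 0 := by
    have : (inner ℝ o y : ℝ) = c0 * inner ℝ (B (e ⟨0, by omega⟩)) y := by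
      conv_lhs => rw [ho_eq]
      rw [real_inner_smul_left]
    rw [hy] at this
    have := (mul_eq_zero.mp this.symm).resolve_left hc0
    rw [B.repr_apply_apply]; exact this
  -- quadratic form expansion
  have expand : ∀ (x : EuclideanSpace ℝ V) (z : EuclideanSpace ℝ V),
      (inner ℝ x z : ℝ) = ∑ i, B.repr x i * inner ℝ (B i) z := by
    intro x z
    conv_lhs => rw [← B.sum_repr x]
    rw [sum_inner]
    congr 1; ext i
    rw [real_inner_smul_left]
  have key4 : (y : V → ℝ) ⬝ᵥ (A *ᵥ y) = ∑ i, μ i * (B.repr y i)^2 := by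
    rw [← inner_eq_dot y (WithLp.toLp 2 (A *ᵥ y)),
      expand y (WithLp.toLp 2 (A *ᵥ y))]
    congr 1; ext i
    rw [key1 i y, ← B.repr_apply_apply]
    ring
  have key5 : (y : V → ℝ) ⬝ᵥ (y : V → ℝ) = ∑ i, (B.repr y i)^2 := by
    rw [← inner_eq_dot y y, expand y y]
    congr 1; ext i
    rw [← B.repr_apply_apply]
    ring
  rw [key4, key5, Finset.mul_sum]
  apply Finset.sum_le_sum
  intro i _
  by_cases hi : i = e ⟨0, by omega⟩
  · rw [hi, key3]; norm_num
  · exact mul_le_mul_of_nonneg_right (hlt i hi) (sq_nonneg _)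

set_option maxHeartbeats 1600000 in
theorem stmt8 {V : Type} [Fintype V] [DecidableEq V]
    (G : SimpleGraph V) [DecidableRel G.Adj] (ℓ m n : ℕ) (hℓ : 1 ≤ ℓ) [NeZero ℓ]
    (P : Fin ℓ → Finset V)
    (hpart : ∀ v : V, ∃! i, v ∈ P i)
    (hm : ∀ i, (P i).card = m)
    (hnoedge : ∀ i, ∀ u ∈ P i, ∀ v ∈ P i, ¬ G.Adj u v)
    (hdeg : ∀ i j, i ≠ j → ∀ v ∈ P i, ((P j).filter (G.Adj v)).card = n)
    (hA : (G.adjMatrix ℝ).IsHermitian)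
    (hcard : 2 ≤ Fintype.card V)
    (e : Fin (Fintype.card V) ≃ V) (hmono : Antitone (hA.eigenvalues ∘ e))
    (hgap : hA.eigenvalues (e ⟨1, by omega⟩) < ((ℓ : ℝ) - 1) * n)
    (S : Fin ℓ → Finset V) (hS : ∀ i, S i ⊆ P i) (a d : ℕ)
    (ha : ∀ j, (S j).card = a) (ha1 : 1 ≤ a)
    (hd : ∀ i : Fin ℓ, ∀ u ∈ S i, d ≤
      (((Finset.univ.filter (fun j : Fin ℓ => j ≠ i)).biUnion S).filter (G.Adj u)).card) :
    (m : ℝ) * ((d : ℝ) - hA.eigenvalues (e ⟨1, by omega⟩)) /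
        (((ℓ : ℝ) - 1) * n - hA.eigenvalues (e ⟨1, by omega⟩)) ≤ a := by
  classical
  set A := G.adjMatrix ℝ with hAdef
  set l2 := hA.eigenvalues (e ⟨1, by omega⟩) with hl2def
  set k : ℝ := ((ℓ : ℝ) - 1) * n with hkdef
  -- partition facts
  have hdisj : ∀ i j : Fin ℓ, i ≠ j → Disjoint (P i) (P j) := by
    intro i j hij
    rw [Finset.disjoint_left]
    intro v hvi hvj
    obtain ⟨w, hw, huniq⟩ := hpart v
    exact hij ((huniq i hvi).trans (huniq j hvj).symm)
  have hcover : (Finset.univ : Finset V) = Finset.univ.biUnion P := by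
    refine (Finset.eq_univ_iff_forall.mpr fun v => ?_).symm
    obtain ⟨i, hi, -⟩ := hpart v
    exact Finset.mem_biUnion.mpr ⟨i, Finset.mem_univ i, hi⟩
  have hNcard : Fintype.card V = ℓ * m := by
    rw [← Finset.card_univ, hcover, Finset.card_biUnion (fun i _ j _ h => hdisj i j h)]
    simp [hm, Finset.sum_const, mul_comm]
  set T : Finset V := Finset.univ.biUnion S with hTdef
  have hdisjS : ∀ i j : Fin ℓ, i ≠ j → Disjoint (S i) (S j) := fun i j hij =>
    (hdisj i j hij).mono (hS i) (hS j)
  have hTcard : T.card = ℓ * a := by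
    rw [hTdef, Finset.card_biUnion (fun i _ j _ h => hdisjS i j h)]
    simp [ha, mul_comm]
  -- degree
  have hdegree : ∀ v : V, G.degree v = (ℓ - 1) * n := by
    intro v
    obtain ⟨i, hvi, _⟩ := hpart v
    have hnb : G.neighborFinset v = Finset.univ.biUnion (fun j => (P j).filter (G.Adj v)) := by
      ext u
      simp only [SimpleGraph.mem_neighborFinset, Finset.mem_biUnion, Finset.mem_filter]
      constructor
      · intro h
        obtain ⟨j, hj, _⟩ := hpart u
        exact ⟨j, Finset.mem_univ _, hj, h⟩
      · rintro ⟨j, _, _, h⟩; exact h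
    rw [SimpleGraph.degree, hnb, Finset.card_biUnion
      (fun p _ q _ hpq => Finset.disjoint_filter_filter (hdisj p q hpq))]
    rw [← Finset.sum_erase_add _ _ (Finset.mem_univ i)]
    have h0 : ((P i).filter (G.Adj v)).card = 0 := by
      rw [Finset.card_eq_zero, Finset.filter_eq_empty_iff]
      intro u hu
      exact hnoedge i v hvi u hu
    rw [h0, add_zero]
    rw [Finset.sum_congr rfl (fun j hj => hdeg i j (Finset.ne_of_mem_erase hj).symm v hvi)]
    rw [Finset.sum_const, Finset.card_erase_of_mem (Finset.mem_univ i), Finset.card_univ,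
      Fintype.card_fin, smul_eq_mul]
  -- the all-ones vector
  set o : V → ℝ := (fun _ => (1:ℝ)) with hodef
  have ho : A *ᵥ o = k • o := by
    funext v
    have hrhs : (k • o) v = k := by
      rw [Pi.smul_apply, hodef]
      exact mul_one k
    rw [hrhs, hAdef, SimpleGraph.adjMatrix_mulVec_apply]
    have h1 : ∀ u ∈ G.neighborFinset v, o u = (1:ℝ) := fun u _ => rfl
    rw [Finset.sum_congr rfl h1, Finset.sum_const, nsmul_eq_mul, mul_one,
      show (G.neighborFinset v).card = (ℓ-1)*n from hdegree v, hkdef]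
    push_cast [Nat.cast_sub hℓ]
    ring
  have hone : (WithLp.toLp 2 o : EuclideanSpace ℝ V) ≠ 0 := by
    intro h
    have hpos : 0 < Fintype.card V := by omega
    obtain ⟨v⟩ := Fintype.card_pos_iff.mp hpos
    have h2 := congrArg (fun f : EuclideanSpace ℝ V => f v) h
    simp [hodef] at h2
  -- the indicator vector
  set x : V → ℝ := (fun v => if v ∈ T then (1:ℝ) else 0) with hxdef
  set Nr : ℝ := (Fintype.card V : ℝ) with hNrdef
  set t : ℝ := (T.card : ℝ) with htdef
  have hNrpos : (0:ℝ) < Nr := by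
    rw [hNrdef]
    exact_mod_cast (by omega : 0 < Fintype.card V)
  set α : ℝ := t / Nr with hαdef
  set y : V → ℝ := x - α • o with hydef
  have hoo : o ⬝ᵥ o = Nr := by
    simp [hodef, dotProduct, hNrdef, Finset.card_univ]
  have hox : o ⬝ᵥ x = t := by
    simp only [hodef, hxdef, dotProduct, one_mul]
    rw [Finset.sum_boole, htdef]
    congr 1
    rw [Finset.filter_mem_eq_inter, Finset.univ_inter]
  have hxo : x ⬝ᵥ o = t := by rw [dotProduct_comm]; exact hox
  have hxx : x ⬝ᵥ x = t := by
    simp only [hxdef, dotProduct, ite_mul, one_mul, zero_mul]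
    have h1 : ∀ v : V, (if v ∈ T then (if v ∈ T then (1:ℝ) else 0) else 0)
        = (if v ∈ T then (1:ℝ) else 0) := by
      intro v; by_cases h : v ∈ T <;> simp [h]
    rw [Finset.sum_congr rfl (fun v _ => h1 v), Finset.sum_boole, htdef]
    congr 1
    rw [Finset.filter_mem_eq_inter, Finset.univ_inter]
  have hoy : o ⬝ᵥ y = 0 := by
    rw [hydef, dotProduct_sub, dotProduct_smul, hox, hoo, smul_eq_mul, hαdef]
    field_simp
    ring
  have hyo : y ⬝ᵥ o = 0 := by rw [dotProduct_comm]; exact hoy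
  -- lower bound on quadratic form
  have hAx : ∀ v : V, (A *ᵥ x) v
      = (((G.neighborFinset v).filter (· ∈ T)).card : ℝ) := by
    intro v
    rw [hAdef, SimpleGraph.adjMatrix_mulVec_apply]
    simp only [hxdef]
    rw [Finset.sum_boole]
  have hQlow : t * d ≤ x ⬝ᵥ (A *ᵥ x) := by
    have hQ : x ⬝ᵥ (A *ᵥ x)
        = ∑ v ∈ T, (((G.neighborFinset v).filter (· ∈ T)).card : ℝ) := by
      rw [dotProduct]
      have h1 : ∀ v : V, x v * (A *ᵥ x) v
          = if v ∈ T then (((G.neighborFinset v).filter (· ∈ T)).card : ℝ) else 0 := by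
        intro v
        rw [hAx v]
        by_cases h : v ∈ T <;> simp [hxdef, h]
      rw [Finset.sum_congr rfl (fun v _ => h1 v), Finset.sum_ite_mem, Finset.univ_inter]
    rw [hQ]
    have h2 : ∀ v ∈ T, (d : ℝ) ≤ (((G.neighborFinset v).filter (· ∈ T)).card : ℝ) := by
      intro v hv
      obtain ⟨i, -, hvS⟩ := Finset.mem_biUnion.mp hv
      have hsub : ((Finset.univ.filter (fun j : Fin ℓ => j ≠ i)).biUnion S).filter (G.Adj v)
          ⊆ (G.neighborFinset v).filter (· ∈ T) := by
        intro u hu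
        rw [Finset.mem_filter] at hu
        obtain ⟨huW, hadj⟩ := hu
        obtain ⟨j, hj, huS⟩ := Finset.mem_biUnion.mp huW
        rw [Finset.mem_filter, SimpleGraph.mem_neighborFinset]
        exact ⟨hadj, Finset.mem_biUnion.mpr ⟨j, Finset.mem_univ _, huS⟩⟩
      have := (hd i v hvS).trans (Finset.card_le_card hsub)
      exact_mod_cast this
    calc t * d = ∑ _v ∈ T, (d : ℝ) := by rw [Finset.sum_const, htdef, nsmul_eq_mul]
      _ ≤ _ := Finset.sum_le_sum h2
  -- upper bound on quadratic form
  have hxsplit : x = α • o + y := by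
    funext v
    simp only [hydef, Pi.add_apply, Pi.sub_apply, Pi.smul_apply, smul_eq_mul]
    ring
  have e1 : o ⬝ᵥ (A *ᵥ o) = k * Nr := by
    rw [ho, dotProduct_smul, hoo, smul_eq_mul]
  have e2 : o ⬝ᵥ (A *ᵥ y) = 0 := by
    rw [dot_symm A hA, ho, smul_dotProduct, hoy, smul_zero]
  have e3 : y ⬝ᵥ (A *ᵥ o) = 0 := by
    rw [ho, dotProduct_smul, hyo, smul_zero]
  have e4 : y ⬝ᵥ (A *ᵥ y) ≤ l2 * (y ⬝ᵥ y) := by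
    refine quad_bound A hA hcard e hmono k ?_ (WithLp.toLp 2 o) ho hone
      (WithLp.toLp 2 y) ?_
    · exact hgap
    · rw [inner_eq_dot]; exact hoy
  have e5 : y ⬝ᵥ y = t - 2*α*t + α^2*Nr := by
    rw [hydef]
    simp only [sub_dotProduct, dotProduct_sub, smul_dotProduct, dotProduct_smul, smul_eq_mul,
      hxx, hoo, hox, hxo]
    ring
  have expand : x ⬝ᵥ (A *ᵥ x)
      = α*α*(o ⬝ᵥ (A *ᵥ o)) + α*(o ⬝ᵥ (A *ᵥ y))
        + α*(y ⬝ᵥ (A *ᵥ o)) + y ⬝ᵥ (A *ᵥ y) := by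
    conv_lhs => rw [hxsplit]
    rw [Matrix.mulVec_add, Matrix.mulVec_smul]
    simp only [add_dotProduct, smul_dotProduct, dotProduct_add, dotProduct_smul, smul_eq_mul]
    ring
  have hQup : x ⬝ᵥ (A *ᵥ x)
      ≤ k*α^2*Nr + l2 * (t - 2*α*t + α^2*Nr) := by
    rw [expand, e1, e2, e3]
    have := e4.trans_eq (by rw [e5])
    nlinarith [this]
  have hmain : t * d ≤ k*α^2*Nr + l2 * (t - 2*α*t + α^2*Nr) := hQlow.trans hQup
  -- numeric conclusion
  have htval : t = (ℓ : ℝ) * a := by rw [htdef, hTcard]; push_cast; ring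
  have hNval : Nr = (ℓ : ℝ) * m := by rw [hNrdef, hNcard]; push_cast; ring
  have hαN : α * Nr = t := div_mul_cancel₀ t hNrpos.ne'
  have hℓpos : (0:ℝ) < (ℓ:ℝ) := by exact_mod_cast hℓ
  have hapos : (0:ℝ) < (a:ℝ) := by exact_mod_cast ha1
  have ham : (a:ℝ) ≤ (m:ℝ) := by
    have := Finset.card_le_card (hS ⟨0, by omega⟩)
    rw [ha, hm] at this
    exact_mod_cast this
  have hmpos : (0:ℝ) < (m:ℝ) := lt_of_lt_of_le hapos ham
  have hαm : α * m = a := by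
    have h1 : α * ((ℓ:ℝ) * m) = (ℓ:ℝ) * a := by rw [← hNval, ← htval]; exact hαN
    have h2 : (ℓ:ℝ) * (α * m) = (ℓ:ℝ) * a := by rw [← h1]; ring
    exact mul_left_cancel₀ hℓpos.ne' h2
  have hklt : l2 < k := hgap
  rw [div_le_iff₀ (by linarith : (0:ℝ) < k - l2)]
  -- reduce hmain
  have h6 : (ℓ:ℝ) * ((a:ℝ)*d) ≤ (ℓ:ℝ) * (k*α*a + l2*(a - α*a)) := by
    have heq : k*α^2*Nr + l2 * (t - 2*α*t + α^2*Nr) = (ℓ:ℝ) * (k*α*a + l2*(a - α*a)) := by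
      rw [htval, hNval]
      linear_combination ((k + l2) * α * (ℓ:ℝ)) * hαm
    calc (ℓ:ℝ) * ((a:ℝ)*d) = t * d := by rw [htval]; ring
      _ ≤ _ := hmain
      _ = _ := heq
  have h7 : (a:ℝ)*d ≤ k*α*a + l2*(a - α*a) := le_of_mul_le_mul_left h6 hℓpos
  have h8 : (d:ℝ) ≤ k*α + l2*(1 - α) := by
    have h7' : (a:ℝ) * (d:ℝ) ≤ (a:ℝ) * (k*α + l2*(1-α)) := by nlinarith [h7]
    exact le_of_mul_le_mul_left h7' hapos
  nlinarith [mul_le_mul_of_nonneg_left h8 hmpos.le, hαm]
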